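/- Let a, b ∈ Aut(T) and let O₁,…,O_k be the orbits of the action of a on the first level X. Suppose there exists a permutation π of X with π⁻¹π_aπ = π_b (where π_a, π_b are the permutations induced by a, b on X) such that for every i = 1,…,k and some (equivalently any) point v ∈ O_i, the automorphisms a^{|O_i|}|_v and b^{|O_i|}|_{v^π} are conjugate in Aut(T). Then a and b are conjugate in Aut(T). -/

import Mathlib

open List

/-- Vertices of the rooted `d`-ary tree `T`: finite words over the alphabet
`X = Fin d`. -/
abbrev Vertex (d : ℕ) := List (Fin d)

/-- `g` is an automorphism of the rooted `d`-ary tree: a bijection of the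
vertex set `X*` preserving word length and the prefix relation. -/
def IsTreeAut {d : ℕ} (g : Equiv.Perm (Vertex d)) : Prop :=
  (∀ v : Vertex d, (g v).length = v.length) ∧
    ∀ v w : Vertex d, g v <+: g (v ++ w)

theorem IsTreeAut.prefix_mono {d : ℕ} {g : Equiv.Perm (Vertex d)} (hg : IsTreeAut g)
    {u u' : Vertex d} (h : u <+: u') : g u <+: g u' := by
  obtain ⟨t, rfl⟩ := h
  exact hg.2 u t

/-- The automorphism group `Aut(T)` of the rooted `d`-ary tree, as a subgroup
of the group of permutations of the vertex set. -/
def treeAut (d : ℕ) : Subgroup (Equiv.Perm (Vertex d)) where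
  carrier := {g | IsTreeAut g}
  one_mem' := ⟨fun _ => rfl, fun v w => ⟨w, rfl⟩⟩
  mul_mem' := by
    intro g h hg hh
    obtain ⟨hg1, hg2⟩ := hg
    obtain ⟨hh1, hh2⟩ := hh
    refine ⟨fun v => ?_, fun v w => ?_⟩
    · simp [Equiv.Perm.mul_apply, hg1, hh1]
    · obtain ⟨t, ht⟩ := hh2 v w
      simp only [Equiv.Perm.mul_apply]
      rw [← ht]
      exact hg2 (h v) t
  inv_mem' := by
    intro g hgmem
    obtain ⟨hg1, hg2⟩ := hgmem
    have hg : IsTreeAut g := ⟨hg1, hg2⟩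
    have hlen' : ∀ v : Vertex d, (g⁻¹ v).length = v.length := by
      intro v
      conv_rhs => rw [← (show ∀ x, g (g⁻¹ x) = x from fun _ => Equiv.Perm.eq_inv_iff_eq.mp rfl) v]
      rw [hg1]
    refine ⟨hlen', fun v w => ?_⟩
    have hle : (g⁻¹ v).length ≤ (g⁻¹ (v ++ w)).length := by
      have h1 := hlen' v
      have h2 := hlen' (v ++ w)
      rw [List.length_append] at h2
      omega
    have htp : (g⁻¹ (v ++ w)).take (g⁻¹ v).length <+: g⁻¹ (v ++ w) :=
      List.take_prefix _ _
    have hgtp : g ((g⁻¹ (v ++ w)).take (g⁻¹ v).length) <+: v ++ w := by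
      have := hg.prefix_mono htp
      rwa [(show ∀ x, g (g⁻¹ x) = x from fun _ => Equiv.Perm.eq_inv_iff_eq.mp rfl)] at this
    have hlen_tp : (g ((g⁻¹ (v ++ w)).take (g⁻¹ v).length)).length = v.length := by
      rw [hg1, List.length_take, min_eq_left hle, hlen' v]
    have hveq : g ((g⁻¹ (v ++ w)).take (g⁻¹ v).length) = v := by
      have h1 := List.prefix_iff_eq_take.mp hgtp
      have h2 := List.prefix_iff_eq_take.mp (List.prefix_append v w)
      rw [h1, hlen_tp]
      exact h2.symm
    have hkey : (g⁻¹ (v ++ w)).take (g⁻¹ v).length = g⁻¹ v := by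
      apply g.injective
      rw [hveq, (show ∀ x, g (g⁻¹ x) = x from fun _ => Equiv.Perm.eq_inv_iff_eq.mp rfl)]
    rw [← hkey]
    exact htp

open scoped Classical in
/-- The state (section) `g|_v` of `g` at the vertex `v` : the unique
automorphism satisfying `g (v ++ w) = g v ++ (g|_v) w` for all `w`. -/
noncomputable def state {d : ℕ} (g : Equiv.Perm (Vertex d)) (v : Vertex d) :
    Equiv.Perm (Vertex d) :=
  if h : Function.Bijective (fun w : Vertex d => (g (v ++ w)).drop v.length) then
    Equiv.ofBijective _ h
  else 1

/-- A finite-state automorphism: one having finitely many states.  The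
finite-state automorphisms form the group `F(X)`. -/
def FiniteState {d : ℕ} (g : Equiv.Perm (Vertex d)) : Prop :=
  (Set.range fun v : Vertex d => state g v).Finite

/-- The cardinality of the orbit `Orb_a(v)` of the vertex `v` under the cyclic
group generated by `a`. -/
noncomputable def orbitCard {d : ℕ} (a : Equiv.Perm (Vertex d)) (v : Vertex d) : ℕ :=
  Nat.card (Set.range fun n : ℤ => (a ^ n) v)

/-- The orbit-signalizer `OS(a) = { a^m|_v : v ∈ X^*, m = |Orb_a(v)| }`. -/
noncomputable def OS {d : ℕ} (a : Equiv.Perm (Vertex d)) : Set (Equiv.Perm (Vertex d)) :=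
  {s | ∃ v : Vertex d, s = state (a ^ orbitCard a v) v}

/-- `a` has finite orbit-signalizer. -/
def FiniteOS {d : ℕ} (a : Equiv.Perm (Vertex d)) : Prop := (OS a).Finite

/-- A self-similar (state-closed) subgroup. -/
def SelfSimilar {d : ℕ} (G : Subgroup (Equiv.Perm (Vertex d))) : Prop :=
  ∀ g ∈ G, ∀ v : Vertex d, state g v ∈ G

/-- A contracting group: there is a finite set `N ⊆ G` such that every
`g ∈ G` has all its states in `N` from some level on. -/
def ContractingGroup {d : ℕ} (G : Subgroup (Equiv.Perm (Vertex d))) : Prop :=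
  ∃ N : Set (Equiv.Perm (Vertex d)), N.Finite ∧ N ⊆ (G : Set (Equiv.Perm (Vertex d))) ∧
    ∀ g ∈ G, ∃ n : ℕ, ∀ v : Vertex d, n ≤ v.length → state g v ∈ N

/-- A contracting automorphism: the self-similar group generated by all of its
states is contracting. -/
def ContractingAut {d : ℕ} (f : Equiv.Perm (Vertex d)) : Prop :=
  ContractingGroup (Subgroup.closure (Set.range fun v : Vertex d => state f v))

/-- The activity sequence `θ_k(g)`: the number of vertices `v` of level `k`
whose state `g|_v` acts nontrivially on the first level `X`. -/
noncomputable def theta {d : ℕ} (g : Equiv.Perm (Vertex d)) (k : ℕ) : ℕ :=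
  Nat.card {v : Vertex d // v.length = k ∧ ∃ x : Fin d, state g v [x] ≠ [x]}

/-- A bounded automorphism: a finite-state automorphism with bounded activity
sequence.  The bounded automorphisms form the group `Pol(0)`. -/
def BoundedAut {d : ℕ} (g : Equiv.Perm (Vertex d)) : Prop :=
  FiniteState g ∧ ∃ C : ℕ, ∀ k : ℕ, theta g k ≤ C

/-- A polynomial automorphism (an element of `Pol(∞)`): a finite-state
automorphism whose activity sequence is polynomially bounded. -/
def PolyAut {d : ℕ} (g : Equiv.Perm (Vertex d)) : Prop :=
  FiniteState g ∧ ∃ p : Polynomial ℕ, ∀ k : ℕ, theta g k ≤ p.eval k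

/-- A finitary automorphism (an element of `Pol(-1)`): all states at some
level are trivial. -/
def Finitary {d : ℕ} (g : Equiv.Perm (Vertex d)) : Prop :=
  ∃ k : ℕ, ∀ v : Vertex d, v.length = k → state g v = 1

/-- A functionally recursive automorphism: a member of some finitely generated
self-similar subgroup of `Aut(T)`.  These form the group `FR(X)`. -/
def FunctionallyRecursive {d : ℕ} (g : Equiv.Perm (Vertex d)) : Prop :=
  ∃ G : Subgroup (Equiv.Perm (Vertex d)), G ≤ treeAut d ∧ SelfSimilar G ∧
    (∃ S : Set (Equiv.Perm (Vertex d)), S.Finite ∧ G = Subgroup.closure S) ∧ g ∈ G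
section AuxLemmas

variable {d : ℕ}

lemma IsTreeAut.nil {g : Equiv.Perm (Vertex d)} (hg : IsTreeAut g) : g [] = [] :=
  List.length_eq_zero_iff.mp (hg.1 [])

lemma IsTreeAut.decomp {g : Equiv.Perm (Vertex d)} (hg : IsTreeAut g) (v w : Vertex d) :
    g (v ++ w) = g v ++ (g (v ++ w)).drop v.length := by
  obtain ⟨t, ht⟩ := hg.2 v w
  rw [← ht, List.drop_left' (hg.1 v)]

lemma state_bij {g : Equiv.Perm (Vertex d)} (hg : IsTreeAut g) (v : Vertex d) :
    Function.Bijective (fun w : Vertex d => (g (v ++ w)).drop v.length) := by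
  have hg' : IsTreeAut g⁻¹ := (treeAut d).inv_mem hg
  constructor
  · intro w w' hww'
    have h1 := hg.decomp v w
    have h2 := hg.decomp v w'
    have : g (v ++ w) = g (v ++ w') := by rw [h1, h2]; exact congrArg _ hww'
    have := g.injective this
    exact List.append_cancel_left this
  · intro u
    refine ⟨(g⁻¹ (g v ++ u)).drop (g v).length, ?_⟩
    have h1 := hg'.decomp (g v) u
    rw [(show g⁻¹ (g v) = v from g.symm_apply_apply v)] at h1
    have h2 : g (v ++ (g⁻¹ (g v ++ u)).drop (g v).length) = g v ++ u := by
      rw [← h1, (show ∀ x, g (g⁻¹ x) = x from fun x => g.apply_symm_apply x)]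
    simp only [h2, List.drop_left' (hg.1 v)]

lemma state_apply {g : Equiv.Perm (Vertex d)} (hg : IsTreeAut g) (v w : Vertex d) :
    state g v w = (g (v ++ w)).drop v.length := by
  unfold state
  rw [dif_pos (state_bij hg v)]
  rfl

lemma state_spec {g : Equiv.Perm (Vertex d)} (hg : IsTreeAut g) (v w : Vertex d) :
    g (v ++ w) = g v ++ state g v w := by
  rw [state_apply hg]
  exact hg.decomp v w

lemma state_eq {g : Equiv.Perm (Vertex d)} (hg : IsTreeAut g) (v : Vertex d)
    (e : Equiv.Perm (Vertex d)) (he : ∀ w, g (v ++ w) = g v ++ e w) :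
    state g v = e :=
  Equiv.ext fun w => List.append_cancel_left ((state_spec hg v w).symm.trans (he w))

lemma state_mem {g : Equiv.Perm (Vertex d)} (hg : IsTreeAut g) (v : Vertex d) :
    state g v ∈ treeAut d := by
  constructor
  · intro w
    have h1 := congrArg List.length (state_spec hg v w)
    rw [hg.1, List.length_append, List.length_append, hg.1] at h1
    omega
  · intro u w
    have h1 := state_spec hg v u
    have h3 : g (v ++ u) <+: g (v ++ (u ++ w)) := by
      rw [← List.append_assoc]
      exact hg.2 (v ++ u) w
    rw [h1, state_spec hg v (u ++ w)] at h3
    obtain ⟨t, ht⟩ := h3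
    exact ⟨t, List.append_cancel_left (by rw [← ht, List.append_assoc])⟩

lemma state_one (v : Vertex d) : state (1 : Equiv.Perm (Vertex d)) v = 1 :=
  state_eq ((treeAut d).one_mem) v 1 (fun _ => rfl)

lemma state_mul {g h : Equiv.Perm (Vertex d)} (hg : IsTreeAut g) (hh : IsTreeAut h)
    (v : Vertex d) : state (g * h) v = state g (h v) * state h v :=
  state_eq ((treeAut d).mul_mem hg hh) v _ (fun w => by
    simp only [Equiv.Perm.mul_apply]
    rw [state_spec hh v w, state_spec hg (h v)])

end AuxLemmas
/-- Let `a, b ∈ Aut(T)` and let `π` be a permutation of the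
first level `X` conjugating the first-level action of `a` to that of `b`.  If
for every point `x` of the first level (covering each orbit `O` of `a` on `X`)
the automorphisms `a^{|O|}|_x` and `b^{|O|}|_{x^π}` are conjugate in `Aut(T)`,
then `a` and `b` are conjugate in `Aut(T)`. -/
theorem conj_of_firstLevel_conj
    (d : ℕ) (hd : 2 ≤ d) (a b : Equiv.Perm (Vertex d))
    (ha : IsTreeAut a) (hb : IsTreeAut b)
    (π : Equiv.Perm (Fin d))
    (hπ : ∀ x : Fin d, b ([π x] : Vertex d) = (a ([x] : Vertex d)).map π)
    (hstates : ∀ x : Fin d,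
      ∃ h : Equiv.Perm (Vertex d), IsTreeAut h ∧
        h * state (a ^ orbitCard a ([x] : Vertex d)) ([x] : Vertex d) * h⁻¹ =
          state (b ^ orbitCard a ([x] : Vertex d)) ([π x] : Vertex d)) :
    ∃ h : Equiv.Perm (Vertex d), IsTreeAut h ∧ h * a * h⁻¹ = b := by
  classical
  -- the permutation σ induced by a on the first level
  have hlen1 : ∀ x : Fin d, ∃ y : Fin d, a [x] = [y] := by
    intro x
    have := ha.1 [x]
    obtain ⟨y, hy⟩ := List.length_eq_one_iff.mp this
    exact ⟨y, hy⟩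
  choose f hf using hlen1
  have hfinj : Function.Injective f := by
    intro x y hxy
    have : a [x] = a [y] := by rw [hf, hf, hxy]
    have := a.injective this
    simpa using this
  obtain ⟨σ, hσ⟩ : ∃ σ : Equiv.Perm (Fin d), ∀ x, σ x = f x := by
    have hbij := (Finite.injective_iff_bijective).mp hfinj
    exact ⟨Equiv.ofBijective f hbij, fun x => rfl⟩
  have haσ : ∀ x : Fin d, a [x] = [σ x] := by intro x; rw [hσ]; exact hf x
  have hbσ : ∀ x : Fin d, b [π x] = [π (σ x)] := by
    intro x; rw [hπ x, haσ x]; rfl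
  -- membership in the automorphism group
  have hamem : ∀ n : ℕ, IsTreeAut (a ^ n) := fun n => (treeAut d).pow_mem ha n
  have hbmem : ∀ n : ℕ, IsTreeAut (b ^ n) := fun n => (treeAut d).pow_mem hb n
  -- actions of powers on the first level
  have hapow : ∀ (n : ℕ) (x : Fin d), (a ^ n) [x] = [(σ ^ n) x] := by
    intro n
    induction n with
    | zero => intro x; simp
    | succ n ih =>
      intro x
      rw [pow_succ', Equiv.Perm.mul_apply, ih, haσ, pow_succ' σ n, Equiv.Perm.mul_apply]
  have hbpow : ∀ (n : ℕ) (x : Fin d), (b ^ n) [π x] = [π ((σ ^ n) x)] := by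
    intro n
    induction n with
    | zero => intro x; simp
    | succ n ih =>
      intro x
      rw [pow_succ', Equiv.Perm.mul_apply, ih, hbσ, pow_succ' σ n, Equiv.Perm.mul_apply]
  have hazpow : ∀ (n : ℤ) (x : Fin d), (a ^ n) [x] = [(σ ^ n) x] := by
    intro n x
    cases n with
    | ofNat k => rw [Int.ofNat_eq_coe, zpow_natCast, zpow_natCast]; exact hapow k x
    | negSucc k =>
      rw [zpow_negSucc, zpow_negSucc]
      apply (a ^ (k + 1)).injective
      rw [(show ∀ y, (a ^ (k + 1)) ((a ^ (k + 1))⁻¹ y) = y from fun y => (a ^ (k + 1)).apply_symm_apply y), hapow,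
        (show ∀ y, (σ ^ (k + 1)) ((σ ^ (k + 1))⁻¹ y) = y from fun y => (σ ^ (k + 1)).apply_symm_apply y)]
  -- minimal periods
  set per : Fin d → ℕ := fun y => Function.minimalPeriod σ y with hper_def
  have hmpos : ∀ y : Fin d, 0 < per y := by
    intro y
    apply Function.IsPeriodicPt.minimalPeriod_pos (orderOf_pos σ)
    show σ^[orderOf σ] y = y
    rw [Equiv.Perm.iterate_eq_pow, pow_orderOf_eq_one]
    rfl
  have hfix : ∀ y : Fin d, (σ ^ per y) y = y := by
    intro y
    have := Function.isPeriodicPt_minimalPeriod σ y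
    rwa [Function.IsPeriodicPt, Function.IsFixedPt, Equiv.Perm.iterate_eq_pow] at this
  have hzred : ∀ (y : Fin d) (n : ℤ), (σ ^ n) y = (σ ^ (n % (per y : ℤ)).toNat) y := by
    intro y n
    have h0 : (0 : ℤ) < (per y : ℤ) := by exact_mod_cast hmpos y
    have hnn : 0 ≤ n % (per y : ℤ) := Int.emod_nonneg n (ne_of_gt h0)
    have hsplit : (per y : ℤ) * (n / (per y : ℤ)) + n % (per y : ℤ) = n :=
      Int.mul_ediv_add_emod n _
    calc (σ ^ n) y = (σ ^ (n % (per y : ℤ))) ((σ ^ ((per y : ℤ) * (n / (per y : ℤ)))) y) := by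
          rw [← Equiv.Perm.mul_apply, ← zpow_add, add_comm, hsplit]
      _ = (σ ^ (n % (per y : ℤ))) y := by
          congr 1
          rw [zpow_mul, zpow_natCast]
          exact Equiv.Perm.zpow_apply_eq_self_of_apply_eq_self (hfix y) _
      _ = (σ ^ (n % (per y : ℤ)).toNat) y := by
          rw [← zpow_natCast σ (n % (per y : ℤ)).toNat, Int.toNat_of_nonneg hnn]
  have hinjIio : ∀ (y : Fin d) {i j : ℕ}, i < per y → j < per y →
      (σ ^ i) y = (σ ^ j) y → i = j := by
    intro y i j hi hj hij
    exact Function.iterate_injOn_Iio_minimalPeriod (Set.mem_Iio.mpr hi) (Set.mem_Iio.mpr hj) hij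
  -- orbitCard equals the minimal period
  have hcard : ∀ y : Fin d, orbitCard a [y] = per y := by
    intro y
    have h0 : (0 : ℤ) < (per y : ℤ) := by exact_mod_cast hmpos y
    have hbij : Function.Bijective
        (fun j : Fin (per y) => (⟨[(σ ^ (j : ℕ)) y], ⟨(j : ℕ), by
          show (a ^ (((j : ℕ) : ℤ))) [y] = _
          rw [hazpow, zpow_natCast]⟩⟩ : (Set.range fun n : ℤ => (a ^ n) [y]))) := by
      constructor
      · intro i j hij
        have h2 : ([(σ ^ (i : ℕ)) y] : Vertex d) = [(σ ^ (j : ℕ)) y] :=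
          congrArg Subtype.val hij
        have h3 : (σ ^ (i : ℕ)) y = (σ ^ (j : ℕ)) y := by simpa using h2
        exact Fin.ext (hinjIio y i.2 j.2 h3)
      · rintro ⟨u, n, hn⟩
        have hnn : 0 ≤ n % (per y : ℤ) := Int.emod_nonneg n (ne_of_gt h0)
        have hlt : n % (per y : ℤ) < (per y : ℤ) := Int.emod_lt_of_pos n h0
        refine ⟨⟨(n % (per y : ℤ)).toNat, by omega⟩, ?_⟩
        apply Subtype.ext
        show ([(σ ^ ((n % (per y : ℤ)).toNat)) y] : Vertex d) = u
        rw [← hzred, ← hazpow]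
        exact hn
    have h1 := (Nat.card_eq_of_bijective _ hbij).symm
    rw [Nat.card_eq_fintype_card (α := Fin (per y)), Fintype.card_fin] at h1
    exact h1
  -- representatives of the orbits on the first level
  set S : Fin d → Finset (Fin d) :=
    fun x => Finset.univ.filter (fun y => σ.SameCycle x y) with hS_def
  have hSne : ∀ x : Fin d, (S x).Nonempty :=
    fun x => ⟨x, by simp [hS_def, Equiv.Perm.SameCycle.refl]⟩
  have hSapply : ∀ x : Fin d, S (σ x) = S x := by
    intro x
    have hxσ : σ.SameCycle x (σ x) := ⟨1, by simp⟩
    ext y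
    simp only [hS_def, Finset.mem_filter, Finset.mem_univ, true_and]
    exact ⟨fun h => hxσ.trans h, fun h => hxσ.symm.trans h⟩
  set rep : Fin d → Fin d := fun x => (S x).min' (hSne x) with hrep_def
  have hrepcyc : ∀ x : Fin d, σ.SameCycle x (rep x) := by
    intro x
    have := (S x).min'_mem (hSne x)
    simpa [hS_def] using this
  have hrepσ : ∀ x : Fin d, rep (σ x) = rep x := by
    intro x
    simp only [hrep_def]
    congr 1
    exact hSapply x
  have hexists : ∀ x : Fin d, ∃ n : ℕ, (σ ^ n) (rep x) = x := by
    intro x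
    obtain ⟨i, hi⟩ := (hrepcyc x).symm
    exact ⟨(i % (per (rep x) : ℤ)).toNat, by rw [← hzred]; exact hi⟩
  set idx : Fin d → ℕ := fun x => Nat.find (hexists x) with hidx_def
  have hidx : ∀ x : Fin d, (σ ^ idx x) (rep x) = x := fun x => Nat.find_spec (hexists x)
  have hidxlt : ∀ x : Fin d, idx x < per (rep x) := by
    intro x
    obtain ⟨n, hn⟩ := hexists x
    have hlt : n % per (rep x) < per (rep x) := Nat.mod_lt _ (hmpos _)
    have hprop : (σ ^ (n % per (rep x))) (rep x) = x := by
      have h2 := Function.iterate_mod_minimalPeriod_eq (f := ⇑σ) (x := rep x) (n := n)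
      simp only [Equiv.Perm.iterate_eq_pow] at h2
      show (σ ^ (n % per (rep x))) (rep x) = x
      rw [show (σ ^ (n % per (rep x))) (rep x)
          = (σ ^ n) (rep x) from h2]
      exact hn
    exact lt_of_le_of_lt (Nat.find_le hprop) hlt
  -- the chosen conjugators on each orbit
  choose hh hhaut hhconj using hstates
  set c : Fin d → Equiv.Perm (Vertex d) := fun x =>
    state (b ^ idx x) [π (rep x)] * hh (rep x) * (state (a ^ idx x) [rep x])⁻¹
    with hc_def
  have hcmem : ∀ x : Fin d, IsTreeAut (c x) := by
    intro x
    exact (treeAut d).mul_mem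
      ((treeAut d).mul_mem (state_mem (hbmem _) _) (hhaut (rep x)))
      ((treeAut d).inv_mem (state_mem (hamem _) _))
  -- recurrences for states of powers
  have hA : ∀ (r : Fin d) (j : ℕ),
      state (a ^ (j + 1)) ([r] : Vertex d) = state a [(σ ^ j) r] * state (a ^ j) [r] := by
    intro r j
    rw [pow_succ' a j, state_mul ha (hamem j), hapow j r]
  have hB : ∀ (r : Fin d) (j : ℕ),
      state (b ^ (j + 1)) ([π r] : Vertex d)
        = state b [π ((σ ^ j) r)] * state (b ^ j) [π r] := by
    intro r j
    rw [pow_succ' b j, state_mul hb (hbmem j), hbpow j r]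
  -- the cocycle identity
  have hcoc : ∀ x : Fin d, c (σ x) * state a ([x] : Vertex d) = state b [π x] * c x := by
    intro x
    have h1 : (σ ^ (idx x + 1)) (rep x) = σ x := by
      rw [pow_succ' σ (idx x), Equiv.Perm.mul_apply, hidx x]
    by_cases hcase : idx x + 1 < per (rep x)
    · have hidxeq : idx (σ x) = idx x + 1 := by
        have hle : idx (σ x) ≤ idx x + 1 := Nat.find_le (by rw [hrepσ]; exact h1)
        have hs : (σ ^ idx (σ x)) (rep x) = σ x := by
          have h2 := hidx (σ x); rwa [hrepσ] at h2
        exact hinjIio (rep x) (lt_of_le_of_lt hle hcase) hcase (hs.trans h1.symm)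
      simp only [hc_def, hrepσ, hidxeq]
      rw [hA (rep x) (idx x), hB (rep x) (idx x), hidx x]
      group
    · have hm : idx x + 1 = per (rep x) := by have := hidxlt x; omega
      have hsx : σ x = rep x := by
        rw [← h1, hm, hfix (rep x)]
      have hrepsx : rep (σ x) = σ x := by rw [hrepσ x, ← hsx]
      have hidxsx : idx (σ x) = 0 := by
        have h0 : (σ ^ 0) (rep (σ x)) = σ x := by rw [pow_zero]; simpa using hrepsx
        exact Nat.eq_zero_of_le_zero (Nat.find_le h0)
      have hconj := hhconj (rep x)
      rw [hcard (rep x), ← hm, hA (rep x) (idx x), hB (rep x) (idx x), hidx x] at hconj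
      have hc0 : c (σ x) = hh (rep x) := by
        simp only [hc_def, hidxsx, hrepσ, pow_zero, state_one, one_mul, inv_one, mul_one]
      rw [hc0]
      simp only [hc_def]
      rw [← mul_assoc, ← mul_assoc, ← hconj]
      group
  -- construct the conjugator
  set hcj : Equiv.Perm (Vertex d) :=
    { toFun := fun l => match l with
        | [] => ([] : Vertex d)
        | x :: w => π x :: c x w
      invFun := fun l => match l with
        | [] => ([] : Vertex d)
        | y :: w => π⁻¹ y :: (c (π⁻¹ y))⁻¹ w
      left_inv := by
        intro l
        cases l with
        | nil => rfl
        | cons x w => simp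
      right_inv := by
        intro l
        cases l with
        | nil => rfl
        | cons y w => simp } with hcj_def
  have hcjnil : hcj ([] : Vertex d) = [] := rfl
  have hcjcons : ∀ (x : Fin d) (w : Vertex d), hcj (x :: w) = π x :: c x w :=
    fun _ _ => rfl
  have hcjaut : IsTreeAut hcj := by
    constructor
    · intro v
      cases v with
      | nil => rfl
      | cons x w =>
        rw [hcjcons]
        simp [(hcmem x).1 w]
    · intro v w
      cases v with
      | nil =>
        rw [List.nil_append, hcjnil]
        exact List.nil_prefix
      | cons x v' =>
        rw [show ((x :: v') ++ w : Vertex d) = x :: (v' ++ w) from rfl, hcjcons, hcjcons]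
        exact List.cons_prefix_cons.mpr ⟨rfl, (hcmem x).2 v' w⟩
  refine ⟨hcj, hcjaut, ?_⟩
  have hcomm : hcj * a = b * hcj := by
    apply Equiv.ext
    intro l
    simp only [Equiv.Perm.mul_apply]
    cases l with
    | nil => rw [ha.nil, hcjnil, hb.nil]
    | cons x w =>
      have h1 : a (x :: w) = σ x :: state a [x] w := by
        have h2 := state_spec ha [x] w
        rw [haσ x] at h2
        exact h2
      have h2 : b (π x :: c x w) = π (σ x) :: state b [π x] (c x w) := by
        have h3 := state_spec hb [π x] (c x w)
        rw [hbσ x] at h3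
        exact h3
      rw [h1, hcjcons, hcjcons, h2]
      congr 1
      have h4 := DFunLike.congr_fun (hcoc x) w
      simpa using h4
  rw [hcomm]
  group
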